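/- arXiv:2505.06765 — 8 statements merged into one kernel-verified Lean document; each statement's English description precedes it below -/
import Mathlib

section
/- Let p ≥ 1 and n ≥ 1 be integers, let z_1, …, z_{p+1} ∈ ℝ^n, and let K ∈ ℝ^{(p+1)×(p+1)} be the symmetric positive-semidefinite Gram matrix with entries K_{ij} = q(z_i, z_j). Let γ ∈ ℝ^{p+1}, define the function-value vector w = Kγ ∈ ℝ^{p+1}, and suppose γᵀKγ ≤ b² for some b > 0. Let ρ > 0, let ν ∈ ℝ^p satisfy |ν_i| ≤ ρ for all i, and set Y ∈ ℝ^p with Y_i = w_i + ν_i for i = 1,…,p. Write P ∈ ℝ^{p×p} for the upper-left p×p block of K, k ∈ ℝ^p for the vector (K_{1,p+1},…,K_{p,p+1})ᵀ, and Ω = P + ρ²I_p (which is positive definite, hence invertible). Define the GP predictive mean μ = YᵀΩ⁻¹k and predictive standard deviation σ = √(K_{p+1,p+1} − kᵀΩ⁻¹k). Then |μ − w_{p+1}| ≤ √(b² − YᵀΩ⁻¹Y + p) · σ, where both quantities under the square roots are nonnegative. -/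
open Matrix

lemma dot_symm' {m : Type*} [Fintype m] {M : Matrix m m ℝ} (hM : Mᵀ = M)
    (x y : m → ℝ) : x ⬝ᵥ M.mulVec y = y ⬝ᵥ M.mulVec x := by
  rw [Matrix.dotProduct_mulVec, ← Matrix.mulVec_transpose, hM, dotProduct_comm]

lemma dot_self_nonneg' {m : Type*} [Fintype m] (u : m → ℝ) : 0 ≤ u ⬝ᵥ u :=
  Finset.sum_nonneg fun _ _ => mul_self_nonneg _

lemma psd_dot {m : Type*} [Fintype m] {M : Matrix m m ℝ} (hM : M.PosSemidef)
    (x : m → ℝ) : 0 ≤ x ⬝ᵥ M.mulVec x := by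
  simpa using hM.dotProduct_mulVec_nonneg x

lemma cs_aux {n1 n2 : Type*} [Fintype n1] [Fintype n2] {M : Matrix n1 n1 ℝ}
    (hM : M.PosSemidef) (ρ : ℝ) (x y : n1 → ℝ) (u v : n2 → ℝ) :
    (x ⬝ᵥ M.mulVec y + ρ ^ 2 * (u ⬝ᵥ v)) ^ 2 ≤
      (x ⬝ᵥ M.mulVec x + ρ ^ 2 * (u ⬝ᵥ u)) * (y ⬝ᵥ M.mulVec y + ρ ^ 2 * (v ⬝ᵥ v)) := by
  have hMt : Mᵀ = M := by
    have := hM.isHermitian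
    exact this
  have key : ∀ t : ℝ, 0 ≤ (y ⬝ᵥ M.mulVec y + ρ ^ 2 * (v ⬝ᵥ v)) * (t * t)
      + (2 * (x ⬝ᵥ M.mulVec y + ρ ^ 2 * (u ⬝ᵥ v))) * t
      + (x ⬝ᵥ M.mulVec x + ρ ^ 2 * (u ⬝ᵥ u)) := by
    intro t
    have h1 := psd_dot hM (x + t • y)
    have h2 : 0 ≤ ρ ^ 2 * ((u + t • v) ⬝ᵥ (u + t • v)) :=
      mul_nonneg (sq_nonneg _) (dot_self_nonneg' _)
    have e1 : (x + t • y) ⬝ᵥ M.mulVec (x + t • y)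
        = x ⬝ᵥ M.mulVec x + 2 * t * (x ⬝ᵥ M.mulVec y) + t ^ 2 * (y ⬝ᵥ M.mulVec y) := by
      simp only [Matrix.mulVec_add, Matrix.mulVec_smul, dotProduct_add, add_dotProduct,
        dotProduct_smul, smul_dotProduct, smul_eq_mul, dot_symm' hMt y x]
      ring
    have e2 : (u + t • v) ⬝ᵥ (u + t • v)
        = u ⬝ᵥ u + 2 * t * (u ⬝ᵥ v) + t ^ 2 * (v ⬝ᵥ v) := by
      simp only [dotProduct_add, add_dotProduct, dotProduct_smul, smul_dotProduct,
        smul_eq_mul, dotProduct_comm v u]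
      ring
    rw [e1] at h1
    rw [e2] at h2
    nlinarith [h1, h2]
  have hd := discrim_le_zero key
  rw [discrim] at hd
  nlinarith [hd]

/-- Deterministic GP error bound (Proposition 1) in finite representer form. -/
theorem stmt_0 (p n : ℕ) (hp : 1 ≤ p) (hn : 1 ≤ n)
    (q : (Fin n → ℝ) → (Fin n → ℝ) → ℝ)
    (hqsymm : ∀ u v, q u v = q v u)
    (z : Fin (p + 1) → (Fin n → ℝ))
    (K : Matrix (Fin (p + 1)) (Fin (p + 1)) ℝ)
    (hKq : ∀ i j, K i j = q (z i) (z j))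
    (hK : K.PosSemidef)
    (γ : Fin (p + 1) → ℝ) (b : ℝ) (hb : 0 < b)
    (w : Fin (p + 1) → ℝ) (hw : w = K.mulVec γ)
    (hγ : γ ⬝ᵥ K.mulVec γ ≤ b ^ 2)
    (ρ : ℝ) (hρ : 0 < ρ)
    (ν : Fin p → ℝ) (hν : ∀ i, |ν i| ≤ ρ)
    (Y : Fin p → ℝ) (hY : ∀ i, Y i = w i.castSucc + ν i)
    (P : Matrix (Fin p) (Fin p) ℝ) (hP : ∀ i j, P i j = K i.castSucc j.castSucc)
    (k : Fin p → ℝ) (hk : ∀ i, k i = K i.castSucc (Fin.last p))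
    (Ω : Matrix (Fin p) (Fin p) ℝ) (hΩ : Ω = P + ρ ^ 2 • 1)
    (μ σ : ℝ)
    (hμ : μ = Y ⬝ᵥ Ω⁻¹.mulVec k)
    (hσ : σ = Real.sqrt (K (Fin.last p) (Fin.last p) - k ⬝ᵥ Ω⁻¹.mulVec k)) :
    0 ≤ K (Fin.last p) (Fin.last p) - k ⬝ᵥ Ω⁻¹.mulVec k ∧
    0 ≤ b ^ 2 - Y ⬝ᵥ Ω⁻¹.mulVec Y + p ∧
    |μ - w (Fin.last p)| ≤ Real.sqrt (b ^ 2 - Y ⬝ᵥ Ω⁻¹.mulVec Y + p) * σ := by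
  have hKt : Kᵀ = K := by
    ext i j
    rw [Matrix.transpose_apply, hKq, hKq, hqsymm]
  have hPsd : P.PosSemidef := by
    have hPsub : P = K.submatrix Fin.castSucc Fin.castSucc := by
      ext i j; simp [hP, Matrix.submatrix_apply]
    rw [hPsub]; exact hK.submatrix _
  have hρ2 : (0:ℝ) < ρ ^ 2 := by positivity
  have hΩpd : Ω.PosDef := by
    rw [hΩ, Matrix.smul_one_eq_diagonal]
    exact Matrix.PosDef.posSemidef_add hPsd (.diagonal fun _ => hρ2)
  have hΩinv : Ω * Ω⁻¹ = 1 := Matrix.mul_nonsing_inv Ω hΩpd.det_pos.ne'.isUnit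
  set a := Ω⁻¹.mulVec k with ha
  set c := Ω⁻¹.mulVec Y with hc
  have hΩa : Ω.mulVec a = k := by rw [ha, Matrix.mulVec_mulVec, hΩinv, Matrix.one_mulVec]
  have hΩc : Ω.mulVec c = Y := by rw [hc, Matrix.mulVec_mulVec, hΩinv, Matrix.one_mulVec]
  have hΩdot : ∀ d e : Fin p → ℝ,
      d ⬝ᵥ P.mulVec e + ρ ^ 2 * (d ⬝ᵥ e) = d ⬝ᵥ Ω.mulVec e := by
    intro d e
    rw [hΩ, Matrix.add_mulVec, dotProduct_add, Matrix.smul_mulVec, Matrix.one_mulVec,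
      dotProduct_smul, smul_eq_mul]
  have hsum : ∀ (d : Fin p → ℝ) (x : Fin (p+1) → ℝ),
      (Fin.snoc d 0 : Fin (p+1) → ℝ) ⬝ᵥ x = d ⬝ᵥ (fun i => x i.castSucc) := by
    intro d x
    rw [dotProduct, dotProduct, Fin.sum_univ_castSucc]
    simp
  have hmv : ∀ (d : Fin p → ℝ) (i : Fin p),
      K.mulVec (Fin.snoc d 0) i.castSucc = P.mulVec d i := by
    intro d i
    rw [Matrix.mulVec, Matrix.mulVec, dotProduct, dotProduct, Fin.sum_univ_castSucc]
    simp [hP]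
  set ψ : Fin (p+1) → ℝ := Pi.single (Fin.last p) 1 with hψ
  have A1 : ∀ d e : Fin p → ℝ,
      (Fin.snoc d 0 : Fin (p+1) → ℝ) ⬝ᵥ K.mulVec (Fin.snoc e 0) = d ⬝ᵥ P.mulVec e := by
    intro d e
    rw [hsum]
    exact congrArg (d ⬝ᵥ ·) (funext fun i => hmv e i)
  have A2 : ∀ d : Fin p → ℝ,
      (Fin.snoc d 0 : Fin (p+1) → ℝ) ⬝ᵥ K.mulVec γ = d ⬝ᵥ (fun i => w i.castSucc) := by
    intro d
    rw [hsum, hw]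
  have A2' : ∀ d : Fin p → ℝ,
      γ ⬝ᵥ K.mulVec (Fin.snoc d 0) = d ⬝ᵥ (fun i => w i.castSucc) := by
    intro d
    rw [dot_symm' hKt]; exact A2 d
  have A3 : γ ⬝ᵥ K.mulVec ψ = w (Fin.last p) := by
    rw [dot_symm' hKt, hψ, single_dotProduct, one_mul, ← hw]
  have A4 : ∀ d : Fin p → ℝ,
      (Fin.snoc d 0 : Fin (p+1) → ℝ) ⬝ᵥ K.mulVec ψ = d ⬝ᵥ k := by
    intro d
    rw [hsum]
    refine congrArg (d ⬝ᵥ ·) (funext fun i => ?_)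
    rw [Matrix.mulVec, hψ, dotProduct_single, mul_one, ← hk]
  have A4' : ∀ d : Fin p → ℝ, ψ ⬝ᵥ K.mulVec (Fin.snoc d 0) = d ⬝ᵥ k := by
    intro d
    rw [dot_symm' hKt]; exact A4 d
  have A5 : ψ ⬝ᵥ K.mulVec ψ = K (Fin.last p) (Fin.last p) := by
    rw [hψ, single_dotProduct, one_mul, Matrix.mulVec, dotProduct_single, mul_one]
  -- key algebraic identities
  have haK : a ⬝ᵥ k = k ⬝ᵥ a := dotProduct_comm a k
  have haY : a ⬝ᵥ Y = μ := by rw [hμ]; exact dotProduct_comm a Y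
  have hcY : c ⬝ᵥ Y = Y ⬝ᵥ c := dotProduct_comm c Y
  have hYd : ∀ d : Fin p → ℝ, d ⬝ᵥ Y = d ⬝ᵥ (fun i => w i.castSucc) + d ⬝ᵥ ν := by
    intro d
    rw [← dotProduct_add]
    congr 1
    funext i
    simp [hY i]
  have hρν : ∀ d : Fin p → ℝ, ρ ^ 2 * (((ρ ^ 2)⁻¹ • ν) ⬝ᵥ d) = ν ⬝ᵥ d := by
    intro d
    rw [smul_dotProduct, smul_eq_mul, ← mul_assoc, mul_inv_cancel₀ hρ2.ne', one_mul]
  have E3 : (ψ - (Fin.snoc a 0 : Fin (p+1) → ℝ)) ⬝ᵥ K.mulVec (ψ - Fin.snoc a 0)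
      + ρ ^ 2 * ((-a) ⬝ᵥ (-a)) = K (Fin.last p) (Fin.last p) - k ⬝ᵥ a := by
    have h1 : a ⬝ᵥ P.mulVec a + ρ ^ 2 * (a ⬝ᵥ a) = a ⬝ᵥ k := by rw [hΩdot, hΩa]
    simp only [Matrix.mulVec_sub, dotProduct_sub, sub_dotProduct, neg_dotProduct,
      dotProduct_neg, neg_neg, A5, A4, A4', A1]
    linear_combination h1 - haK
  have E2 : (γ - (Fin.snoc c 0 : Fin (p+1) → ℝ)) ⬝ᵥ K.mulVec (γ - Fin.snoc c 0)
      + ρ ^ 2 * (((ρ ^ 2)⁻¹ • ν - c) ⬝ᵥ ((ρ ^ 2)⁻¹ • ν - c))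
      = γ ⬝ᵥ K.mulVec γ + ρ ^ 2 * (((ρ ^ 2)⁻¹ • ν) ⬝ᵥ ((ρ ^ 2)⁻¹ • ν)) - Y ⬝ᵥ c := by
    have h1 : c ⬝ᵥ P.mulVec c + ρ ^ 2 * (c ⬝ᵥ c) = c ⬝ᵥ Y := by rw [hΩdot, hΩc]
    have h2 := hYd c
    have h3 := hρν c
    have hcomm1 : c ⬝ᵥ ((ρ ^ 2)⁻¹ • ν) = ((ρ ^ 2)⁻¹ • ν) ⬝ᵥ c := dotProduct_comm _ _
    have hcomm2 : c ⬝ᵥ ν = ν ⬝ᵥ c := dotProduct_comm _ _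
    simp only [Matrix.mulVec_sub, dotProduct_sub, sub_dotProduct, A1, A2, A2']
    linear_combination h1 - hcY + 2 * h2 - 2 * h3 - ρ ^ 2 * hcomm1 + 2 * hcomm2
  have E1 : (γ - (Fin.snoc c 0 : Fin (p+1) → ℝ)) ⬝ᵥ K.mulVec (ψ - Fin.snoc a 0)
      + ρ ^ 2 * (((ρ ^ 2)⁻¹ • ν - c) ⬝ᵥ (-a)) = w (Fin.last p) - μ := by
    have g1 : c ⬝ᵥ P.mulVec a + ρ ^ 2 * (c ⬝ᵥ a) = c ⬝ᵥ k := by rw [hΩdot, hΩa]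
    have g2 := hρν a
    have g3 := hYd a
    have gc : a ⬝ᵥ ν = ν ⬝ᵥ a := dotProduct_comm _ _
    simp only [Matrix.mulVec_sub, dotProduct_sub, sub_dotProduct, dotProduct_neg,
      neg_dotProduct, A3, A2, A2', A4, A4', A1]
    linear_combination g1 - g2 + g3 - haY + gc
  -- noise norm bound
  have hW2 : ρ ^ 2 * (((ρ ^ 2)⁻¹ • ν) ⬝ᵥ ((ρ ^ 2)⁻¹ • ν)) ≤ (p : ℝ) := by
    have hνν : ν ⬝ᵥ ν ≤ (p : ℝ) * ρ ^ 2 := by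
      rw [dotProduct]
      calc ∑ i, ν i * ν i ≤ ∑ _i : Fin p, ρ ^ 2 := by
            refine Finset.sum_le_sum fun i _ => ?_
            have h := abs_le.mp (hν i)
            nlinarith [h.1, h.2]
        _ = (p : ℝ) * ρ ^ 2 := by simp [Finset.sum_const, Finset.card_univ, mul_comm]
    have heq : ρ ^ 2 * (((ρ ^ 2)⁻¹ • ν) ⬝ᵥ ((ρ ^ 2)⁻¹ • ν)) = (ρ ^ 2)⁻¹ * (ν ⬝ᵥ ν) := by
      rw [smul_dotProduct, dotProduct_smul, smul_eq_mul, smul_eq_mul]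
      field_simp
    rw [heq, inv_mul_le_iff₀ hρ2]
    linarith [hνν]
  have CS := cs_aux hK ρ (γ - Fin.snoc c 0) (ψ - Fin.snoc a 0) ((ρ ^ 2)⁻¹ • ν - c) (-a)
  rw [E1, E2, E3] at CS
  have hT0 : 0 ≤ K (Fin.last p) (Fin.last p) - k ⬝ᵥ a := by
    rw [← E3]
    exact add_nonneg (psd_dot hK _) (mul_nonneg (sq_nonneg ρ) (dot_self_nonneg' _))
  have hQ0 : 0 ≤ γ ⬝ᵥ K.mulVec γ + ρ ^ 2 * (((ρ ^ 2)⁻¹ • ν) ⬝ᵥ ((ρ ^ 2)⁻¹ • ν)) - Y ⬝ᵥ c := by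
    rw [← E2]
    exact add_nonneg (psd_dot hK _) (mul_nonneg (sq_nonneg ρ) (dot_self_nonneg' _))
  have hS0 : 0 ≤ b ^ 2 - Y ⬝ᵥ c + p := by linarith [hγ, hW2, hQ0]
  refine ⟨hT0, hS0, ?_⟩
  have hsq : (μ - w (Fin.last p)) ^ 2
      ≤ (b ^ 2 - Y ⬝ᵥ c + p) * (K (Fin.last p) (Fin.last p) - k ⬝ᵥ a) := by
    nlinarith [CS, hT0, hQ0, hγ, hW2]
  rw [hσ]
  calc |μ - w (Fin.last p)| = Real.sqrt ((μ - w (Fin.last p)) ^ 2) :=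
        (Real.sqrt_sq_eq_abs _).symm
    _ ≤ Real.sqrt ((b ^ 2 - Y ⬝ᵥ c + p) * (K (Fin.last p) (Fin.last p) - k ⬝ᵥ a)) :=
        Real.sqrt_le_sqrt hsq
    _ = Real.sqrt (b ^ 2 - Y ⬝ᵥ c + p) * Real.sqrt (K (Fin.last p) (Fin.last p) - k ⬝ᵥ a) :=
        Real.sqrt_mul hS0 _
end

section
/- Let p ≥ 1, let K ∈ ℝ^{(p+1)×(p+1)} be symmetric positive semidefinite with upper-left p×p block P, let γ ∈ ℝ^{p+1}, set w = Kγ and suppose γᵀKγ ≤ b² for some b > 0. Let ρ > 0, let ν ∈ ℝ^p with |ν_i| ≤ ρ for all i, set Y_i = w_i + ν_i for i = 1,…,p, and let Ω = P + ρ²I_p. Then YᵀΩ⁻¹Y ≤ b² + p; equivalently, the quantity b² − YᵀΩ⁻¹Y + p appearing under the square root in the GP error-bound factor B is nonnegative. -/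
open Matrix

/-- Well-definedness of the GP error-bound factor `B`: under the representer
form of the RKHS-norm bound and sup-norm bounded noise, `YᵀΩ⁻¹Y ≤ b² + p`. -/
theorem stmt_2 (p : ℕ) (hp : 1 ≤ p)
    (K : Matrix (Fin (p + 1)) (Fin (p + 1)) ℝ) (hK : K.PosSemidef)
    (P : Matrix (Fin p) (Fin p) ℝ) (hP : ∀ i j, P i j = K i.castSucc j.castSucc)
    (γ : Fin (p + 1) → ℝ) (b : ℝ) (hb : 0 < b)
    (w : Fin (p + 1) → ℝ) (hw : w = K.mulVec γ)
    (hγ : γ ⬝ᵥ K.mulVec γ ≤ b ^ 2)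
    (ρ : ℝ) (hρ : 0 < ρ)
    (ν : Fin p → ℝ) (hν : ∀ i, |ν i| ≤ ρ)
    (Y : Fin p → ℝ) (hY : ∀ i, Y i = w i.castSucc + ν i)
    (Ω : Matrix (Fin p) (Fin p) ℝ) (hΩ : Ω = P + ρ ^ 2 • 1) :
    Y ⬝ᵥ Ω⁻¹.mulVec Y ≤ b ^ 2 + p := by
  have hρ2 : (0:ℝ) < ρ ^ 2 := by positivity
  -- symmetry of K
  have hKsymm : ∀ i j, K j i = K i j := by
    intro i j
    have := congrFun (congrFun hK.1 i) j
    simpa [Matrix.conjTranspose_apply] using this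
  -- extension of a vector by zero
  -- P is positive semidefinite in the quadratic-form sense
  have hPq : ∀ x : Fin p → ℝ, 0 ≤ x ⬝ᵥ P.mulVec x := by
    intro x
    set xt : Fin (p+1) → ℝ := Fin.snoc x 0 with hxt
    have key : x ⬝ᵥ P.mulVec x = xt ⬝ᵥ K.mulVec xt := by
      simp only [dotProduct, mulVec, Fin.sum_univ_castSucc, hxt, Fin.snoc_castSucc,
        Fin.snoc_last, hP, zero_mul, mul_zero, add_zero, Finset.sum_add_distrib]
    rw [key]
    simpa using hK.dotProduct_mulVec_nonneg xt
  -- Ω is positive definite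
  have hΩpd : Ω.PosDef := by
    refine Matrix.posDef_iff_dotProduct_mulVec.mpr ⟨?_, ?_⟩
    · rw [hΩ]
      have hPh : P.IsHermitian := by
        ext i j
        simp [Matrix.conjTranspose_apply, hP, hKsymm]
      exact hPh.add (by simp [Matrix.IsHermitian, Matrix.conjTranspose_smul])
    · intro x hx
      have hxx : 0 < x ⬝ᵥ x := by
        rcases Function.ne_iff.mp hx with ⟨i, hi⟩
        have : 0 < ∑ j, x j * x j :=
          Finset.sum_pos' (fun j _ => mul_self_nonneg _)
            ⟨i, Finset.mem_univ i, mul_self_pos.mpr hi⟩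
        simpa [dotProduct] using this
      have : x ⬝ᵥ Ω.mulVec x = x ⬝ᵥ P.mulVec x + ρ ^ 2 * (x ⬝ᵥ x) := by
        simp [hΩ, Matrix.add_mulVec, Matrix.smul_mulVec, dotProduct_add,
          dotProduct_smul, smul_eq_mul]
      have h := hPq x
      simp only [star_trivial]
      rw [this]
      nlinarith
  have hunit : IsUnit Ω.det := isUnit_iff_ne_zero.mpr hΩpd.det_pos.ne'
  set z : Fin p → ℝ := Ω⁻¹.mulVec Y with hz
  have hΩz : Ω.mulVec z = Y := by
    rw [hz, Matrix.mulVec_mulVec, Matrix.mul_nonsing_inv _ hunit, Matrix.one_mulVec]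
  -- rewrite the goal quantity
  have hgoal : Y ⬝ᵥ Ω⁻¹.mulVec Y = 2 * (z ⬝ᵥ Y) - z ⬝ᵥ Ω.mulVec z := by
    rw [← hz, hΩz]
    have : Y ⬝ᵥ z = z ⬝ᵥ Y := dotProduct_comm _ _
    rw [this]
    have h2 : z ⬝ᵥ Y = z ⬝ᵥ Ω.mulVec z := by rw [hΩz]
    rw [h2]; ring
  rw [hgoal]
  -- split into kernel part and noise part
  set zt : Fin (p+1) → ℝ := Fin.snoc z 0 with hzt
  have hA : z ⬝ᵥ (fun i : Fin p => w i.castSucc) = zt ⬝ᵥ K.mulVec γ := by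
    rw [hw]
    simp [dotProduct, Fin.sum_univ_castSucc, hzt]
  have hB : z ⬝ᵥ P.mulVec z = zt ⬝ᵥ K.mulVec zt := by
    simp only [dotProduct, mulVec, Fin.sum_univ_castSucc, hzt, Fin.snoc_castSucc,
      Fin.snoc_last, hP, zero_mul, mul_zero, add_zero, Finset.sum_add_distrib]
  have hzY : z ⬝ᵥ Y = zt ⬝ᵥ K.mulVec γ + z ⬝ᵥ ν := by
    have : Y = (fun i : Fin p => w i.castSucc) + ν := by
      funext i; simp [hY]
    rw [this, dotProduct_add, hA]
  have hzΩz : z ⬝ᵥ Ω.mulVec z = zt ⬝ᵥ K.mulVec zt + ρ ^ 2 * (z ⬝ᵥ z) := by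
    rw [hΩ]
    simp [Matrix.add_mulVec, Matrix.smul_mulVec, dotProduct_add,
      dotProduct_smul, smul_eq_mul, hB]
  rw [hzY, hzΩz]
  -- kernel part: 2 ztᵀKγ - ztᵀKzt ≤ γᵀKγ ≤ b²
  have hker : 2 * (zt ⬝ᵥ K.mulVec γ) - zt ⬝ᵥ K.mulVec zt ≤ b ^ 2 := by
    have h0 : 0 ≤ (γ - zt) ⬝ᵥ K.mulVec (γ - zt) := by simpa using hK.dotProduct_mulVec_nonneg (γ - zt)
    have hsymmdp : zt ⬝ᵥ K.mulVec γ = γ ⬝ᵥ K.mulVec zt := by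
      simp only [dotProduct, mulVec, Finset.mul_sum]
      rw [Finset.sum_comm]
      exact Finset.sum_congr rfl fun i _ => Finset.sum_congr rfl fun j _ => by
        rw [hKsymm i j]; ring
    have hexp : (γ - zt) ⬝ᵥ K.mulVec (γ - zt) =
        γ ⬝ᵥ K.mulVec γ - 2 * (zt ⬝ᵥ K.mulVec γ) + zt ⬝ᵥ K.mulVec zt := by
      rw [Matrix.mulVec_sub, sub_dotProduct, dotProduct_sub, dotProduct_sub, hsymmdp]
      ring
    rw [hexp] at h0
    linarith
  -- noise part: 2 zᵀν - ρ² zᵀz ≤ p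
  have hnoise : 2 * (z ⬝ᵥ ν) - ρ ^ 2 * (z ⬝ᵥ z) ≤ (p : ℝ) := by
    have : 2 * (z ⬝ᵥ ν) - ρ ^ 2 * (z ⬝ᵥ z) =
        ∑ i, (2 * (z i * ν i) - ρ ^ 2 * (z i * z i)) := by
      simp [dotProduct, Finset.mul_sum, Finset.sum_sub_distrib]
    rw [this]
    calc ∑ i, (2 * (z i * ν i) - ρ ^ 2 * (z i * z i)) ≤ ∑ _i : Fin p, (1:ℝ) := by
          apply Finset.sum_le_sum
          intro i _
          have hνi : ν i ^ 2 ≤ ρ ^ 2 := by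
            have := hν i
            nlinarith [abs_nonneg (ν i), sq_abs (ν i)]
          have h1 : ρ ^ 2 * (2 * (z i * ν i) - ρ ^ 2 * (z i * z i)) ≤ ρ ^ 2 * 1 := by
            nlinarith [sq_nonneg (ρ ^ 2 * z i - ν i)]
          exact (mul_le_mul_iff_right₀ hρ2).mp h1
      _ = (p : ℝ) := by simp
  linarith
end

section
/- Let q : ℝⁿ × ℝⁿ → ℝ be a symmetric kernel all of whose Gram matrices are positive semidefinite, let ρ > 0, and for a tuple X = (x₁,…,x_p) of points in ℝⁿ write P(X) for the p×p Gram matrix with entries P(X)_{ij} = q(x_i, x_j), Q(x,X) = (q(x,x₁),…,q(x,x_p))ᵀ ∈ ℝ^p, and Ω(X) = P(X) + ρ²I_p (which is positive definite, hence invertible). Let X = (x₁,…,x_p), let l ∈ {1,…,p}, let x ∈ ℝⁿ, let X̲ be X with entry l deleted, and let X⁺ be X̲ with x appended as the last entry. Set Σ = Ω(X)⁻¹, Σ̲ = Σ_{¬l,¬l} − (1/Σ_{ll}) Σ_{¬l,l} Σ_{¬l,l}ᵀ, ζ = Σ̲ Q(x, X̲), and τ = q(x,x) − Q(x,X̲)ᵀ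 ζ + ρ². Then τ > 0 and the block matrix [[Σ̲ + (1/τ) ζζᵀ, −(1/τ) ζ],[−(1/τ) ζᵀ, 1/τ]] equals Ω(X⁺)⁻¹. -/
open Matrix

private lemma gram_posDef {n m : ℕ} (q : (Fin n → ℝ) → (Fin n → ℝ) → ℝ)
    (hqpsd : ∀ (m : ℕ) (z : Fin m → (Fin n → ℝ)),
      (Matrix.of fun i j => q (z i) (z j)).PosSemidef)
    (ρ : ℝ) (hρ : 0 < ρ) (z : Fin m → (Fin n → ℝ)) :
    ((Matrix.of fun i j => q (z i) (z j)) + ρ ^ 2 • (1 : Matrix (Fin m) (Fin m) ℝ)).PosDef := by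
  refine Matrix.PosDef.posSemidef_add (hqpsd m z) (Matrix.PosDef.of_dotProduct_mulVec_pos ?_ fun ⦃v⦄ hv => ?_)
  · simp [Matrix.IsHermitian]
  · rw [Matrix.smul_mulVec, Matrix.one_mulVec, dotProduct_smul]
    have h1 : 0 < star v ⬝ᵥ v := by
      simpa using Matrix.dotProduct_star_self_pos_iff.mpr hv
    have h2 : (0:ℝ) < ρ^2 := by positivity
    simpa [smul_eq_mul] using mul_pos h2 h1

/-- Single-step correctness of the recursive update of the inverted regularized
Gram matrix (the Σ-part of Proposition 2): removing point `l` and appending the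
new point `x`, the inverse `Ω(X⁺)⁻¹` is obtained from `Σ = Ω(X)⁻¹` via the
downdate formula, the Schur scalar `τ` and the vector `ζ`; moreover `τ > 0`. -/
theorem stmt_5 (n p : ℕ) (hp : 1 ≤ p)
    (q : (Fin n → ℝ) → (Fin n → ℝ) → ℝ)
    (hqsymm : ∀ u v, q u v = q v u)
    (hqpsd : ∀ (m : ℕ) (z : Fin m → (Fin n → ℝ)),
      (Matrix.of fun i j => q (z i) (z j)).PosSemidef)
    (ρ : ℝ) (hρ : 0 < ρ)
    (X : Fin (p + 1) → (Fin n → ℝ)) (l : Fin (p + 1)) (x : Fin n → ℝ)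
    (Xdel : Fin p → (Fin n → ℝ)) (hXdel : Xdel = X ∘ l.succAbove)
    (Xplus : Fin (p + 1) → (Fin n → ℝ)) (hXplus : Xplus = Fin.snoc Xdel x)
    (S : Matrix (Fin (p + 1)) (Fin (p + 1)) ℝ)
    (hS : S = ((Matrix.of fun i j => q (X i) (X j)) + ρ ^ 2 • 1)⁻¹)
    (Sdel : Matrix (Fin p) (Fin p) ℝ)
    (hSdel : Sdel = S.submatrix l.succAbove l.succAbove -
      (S l l)⁻¹ • vecMulVec (fun i => S (l.succAbove i) l)
        (fun j => S (l.succAbove j) l))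
    (ζ : Fin p → ℝ) (hζ : ζ = Sdel.mulVec (fun i => q x (Xdel i)))
    (τ : ℝ) (hτ : τ = q x x - (fun i => q x (Xdel i)) ⬝ᵥ ζ + ρ ^ 2) :
    0 < τ ∧
    (Matrix.of fun i j =>
      Fin.lastCases
        (Fin.lastCases (1 / τ) (fun j' => -(1 / τ) * ζ j') j)
        (fun i' => Fin.lastCases (-(1 / τ) * ζ i')
          (fun j' => Sdel i' j' + (1 / τ) * ζ i' * ζ j') j) i) =
      ((Matrix.of fun i j => q (Xplus i) (Xplus j)) + ρ ^ 2 • 1)⁻¹ := by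
  set A : Matrix (Fin (p+1)) (Fin (p+1)) ℝ :=
    (Matrix.of fun i j => q (X i) (X j)) + ρ ^ 2 • 1 with hAdef
  have hApos : A.PosDef := gram_posDef q hqpsd ρ hρ X
  have hSA : S * A = 1 := by
    rw [hS]; exact Matrix.nonsing_inv_mul A hApos.det_pos.ne'.isUnit
  have hSpos : S.PosDef := hS ▸ hApos.inv
  have hSsym : ∀ i j, S i j = S j i := fun i j => by
    have := hSpos.isHermitian
    rw [Matrix.IsHermitian] at this
    conv_rhs => rw [← this]
    simp [Matrix.conjTranspose_apply]
  have hSll : 0 < S l l := by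
    have := hSpos.dotProduct_mulVec_pos (x := Pi.single l 1) (by simp [Function.ne_iff])
    simpa [Matrix.mulVec_single, dotProduct, Pi.single_apply, Finset.sum_ite_eq] using this
  -- the deleted matrix
  set Adel : Matrix (Fin p) (Fin p) ℝ :=
    (Matrix.of fun i j => q (Xdel i) (Xdel j)) + ρ ^ 2 • 1 with hAdeldef
  have hAdelpos : Adel.PosDef := gram_posDef q hqpsd ρ hρ Xdel
  have hAdelA : ∀ i j, Adel i j = A (l.succAbove i) (l.succAbove j) := by
    intro i j
    simp [hAdeldef, hAdef, hXdel, Matrix.one_apply, Fin.succAbove_right_inj]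
  have hAdelsym : ∀ i j, Adel i j = Adel j i := by
    intro i j
    simp [hAdeldef, Matrix.one_apply, hqsymm (Xdel i) (Xdel j), eq_comm]
  -- key sum identities from S * A = 1
  have key1 : ∀ i j : Fin p,
      ∑ k : Fin p, S (l.succAbove i) (l.succAbove k) * A (l.succAbove k) (l.succAbove j) =
        (if i = j then (1:ℝ) else 0) - S (l.succAbove i) l * A l (l.succAbove j) := by
    intro i j
    have h := congrFun (congrFun hSA (l.succAbove i)) (l.succAbove j)
    rw [Matrix.mul_apply,
      Fin.sum_univ_succAbove (fun k => S (l.succAbove i) k * A k (l.succAbove j)) l,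
      Matrix.one_apply] at h
    rw [if_congr (Fin.succAbove_right_inj) rfl rfl] at h
    linarith [h]
  have key2 : ∀ j : Fin p,
      ∑ k : Fin p, S l (l.succAbove k) * A (l.succAbove k) (l.succAbove j) =
        -(S l l * A l (l.succAbove j)) := by
    intro j
    have h := congrFun (congrFun hSA l) (l.succAbove j)
    rw [Matrix.mul_apply,
      Fin.sum_univ_succAbove (fun k => S l k * A k (l.succAbove j)) l,
      Matrix.one_apply_ne (Fin.succAbove_ne l j).symm] at h
    linarith [h]
  have hSdelAdel' : ∀ i j : Fin p,
      ∑ k, Sdel i k * Adel k j = if i = j then (1:ℝ) else 0 := by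
    intro i j
    have expand : ∀ k, Sdel i k * Adel k j =
        S (l.succAbove i) (l.succAbove k) * A (l.succAbove k) (l.succAbove j) -
          (S l l)⁻¹ * S (l.succAbove i) l *
            (S l (l.succAbove k) * A (l.succAbove k) (l.succAbove j)) := by
      intro k
      rw [hSdel]
      simp only [Matrix.sub_apply, Matrix.smul_apply, Matrix.vecMulVec_apply,
        Matrix.submatrix_apply, smul_eq_mul, hAdelA]
      rw [hSsym l (l.succAbove k)]
      ring
    rw [Finset.sum_congr rfl fun k _ => expand k, Finset.sum_sub_distrib,
      ← Finset.mul_sum, key1, key2]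
    have : (S l l)⁻¹ * S l l = 1 := inv_mul_cancel₀ hSll.ne'
    field_simp
    split_ifs <;> ring
  have hSdelAdel : Sdel * Adel = 1 := by
    ext i j
    rw [Matrix.mul_apply, hSdelAdel' i j, Matrix.one_apply]
  have hAdelSdel : Adel * Sdel = 1 := mul_eq_one_comm.mp hSdelAdel
  -- vectors
  set u : Fin p → ℝ := fun i => q x (Xdel i) with hudef
  have hAdelζ : Adel *ᵥ ζ = u := by
    rw [hζ, Matrix.mulVec_mulVec, hAdelSdel, Matrix.one_mulVec]
  have hAdelζ' : ∀ j, ∑ k, Adel j k * ζ k = u j := fun j => by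
    have := congrFun hAdelζ j
    simpa [Matrix.mulVec, dotProduct] using this
  have hζAdel : ∀ j, ∑ k, ζ k * Adel k j = u j := fun j => by
    rw [← hAdelζ' j]
    exact Finset.sum_congr rfl fun k _ => by rw [hAdelsym k j]; ring
  have hζSdel : ∀ j, ∑ k, Sdel j k * u k = ζ j := fun j => by
    have := congrFun hζ j
    simp [Matrix.mulVec, dotProduct] at this
    rw [this]
  -- the new matrix
  set Aplus : Matrix (Fin (p+1)) (Fin (p+1)) ℝ :=
    (Matrix.of fun i j => q (Xplus i) (Xplus j)) + ρ ^ 2 • 1 with hAplusdef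
  have hApluspos : Aplus.PosDef := gram_posDef q hqpsd ρ hρ Xplus
  have hAp_cc : ∀ i j : Fin p, Aplus i.castSucc j.castSucc = Adel i j := by
    intro i j
    simp [hAplusdef, hAdeldef, hXplus, Matrix.one_apply, Fin.castSucc_inj]
  have hAp_cl : ∀ i : Fin p, Aplus i.castSucc (Fin.last p) = u i := by
    intro i
    simp [hAplusdef, hXplus, Matrix.one_apply, (Fin.castSucc_lt_last i).ne,
      hqsymm (Xdel i) x, hudef]
  have hAp_lc : ∀ j : Fin p, Aplus (Fin.last p) j.castSucc = u j := by
    intro j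
    simp [hAplusdef, hXplus, Matrix.one_apply, (Fin.castSucc_lt_last j).ne', hudef]
  have hAp_ll : Aplus (Fin.last p) (Fin.last p) = q x x + ρ ^ 2 := by
    simp [hAplusdef, hXplus, Matrix.one_apply]
  -- positivity of τ
  have hτpos : 0 < τ := by
    set v : Fin (p+1) → ℝ := Fin.snoc (fun i => -ζ i) 1 with hvdef
    have hv : v ≠ 0 := by
      intro h
      have := congrFun h (Fin.last p)
      simp [hvdef] at this
    have hpos := hApluspos.dotProduct_mulVec_pos hv
    have hcalc : star v ⬝ᵥ Aplus *ᵥ v = τ := by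
      have hsv : star v = v := by funext i; simp
      have hvc : ∀ i : Fin p, v i.castSucc = -ζ i := fun i => by simp [hvdef]
      have hvl : v (Fin.last p) = 1 := by simp [hvdef]
      have hrow : ∀ i : Fin (p+1), (Aplus *ᵥ v) i =
          ∑ j : Fin p, Aplus i j.castSucc * (-ζ j) + Aplus i (Fin.last p) := by
        intro i
        rw [Matrix.mulVec, dotProduct, Fin.sum_univ_castSucc, hvl, mul_one]
        congr 1
        exact Finset.sum_congr rfl fun j _ => by rw [hvc]
      have hrow_c : ∀ i : Fin p, (Aplus *ᵥ v) i.castSucc = 0 := by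
        intro i
        rw [hrow]
        simp_rw [hAp_cc, hAp_cl]
        have h1 : ∑ j, Adel i j * (-ζ j) = -u i := by
          rw [← hAdelζ' i, ← Finset.sum_neg_distrib]
          exact Finset.sum_congr rfl fun j _ => by ring
        rw [h1]; ring
      have hrow_l : (Aplus *ᵥ v) (Fin.last p) =
          ∑ j, u j * (-ζ j) + (q x x + ρ ^ 2) := by
        rw [hrow]
        simp_rw [hAp_lc, hAp_ll]
      rw [hsv, hτ, dotProduct, Fin.sum_univ_castSucc]
      simp_rw [hrow_c, mul_zero, Finset.sum_const_zero, hvl, one_mul, hrow_l, zero_add]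
      rw [dotProduct]
      have h2 : ∑ j, u j * (-ζ j) = -∑ j, u j * ζ j := by
        rw [← Finset.sum_neg_distrib]
        exact Finset.sum_congr rfl fun j _ => by ring
      rw [h2]; ring
    rw [hcalc] at hpos
    exact hpos
  have hτne : τ ≠ 0 := hτpos.ne'
  have hζu : ∑ k, ζ k * u k = u ⬝ᵥ ζ := by
    rw [dotProduct]
    exact Finset.sum_congr rfl fun k _ => by ring
  have hqρ : q x x + ρ ^ 2 = τ + u ⬝ᵥ ζ := by rw [hτ]; ring
  refine ⟨hτpos, ?_⟩
  symm
  apply Matrix.inv_eq_left_inv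
  ext i j
  rw [Matrix.mul_apply]
  induction i using Fin.lastCases with
  | last =>
    induction j using Fin.lastCases with
    | last =>
      rw [Fin.sum_univ_castSucc]
      simp only [Matrix.of_apply, Fin.lastCases_castSucc, Fin.lastCases_last]
      simp_rw [hAp_cl, hAp_ll]
      have e : ∀ k, -(1 / τ) * ζ k * u k = -(1 / τ) * (ζ k * u k) := fun k => by ring
      rw [Finset.sum_congr rfl fun k _ => e k, ← Finset.mul_sum, hζu,
        Matrix.one_apply_eq, hqρ]
      field_simp
      ring
    | cast j' =>
      rw [Fin.sum_univ_castSucc]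
      simp only [Matrix.of_apply, Fin.lastCases_castSucc, Fin.lastCases_last]
      simp_rw [hAp_cc, hAp_lc]
      have e : ∀ k, -(1 / τ) * ζ k * Adel k j' = -(1 / τ) * (ζ k * Adel k j') :=
        fun k => by ring
      rw [Finset.sum_congr rfl fun k _ => e k, ← Finset.mul_sum, hζAdel,
        Matrix.one_apply_ne (Fin.castSucc_lt_last j').ne']
      ring
  | cast i' =>
    induction j using Fin.lastCases with
    | last =>
      rw [Fin.sum_univ_castSucc]
      simp only [Matrix.of_apply, Fin.lastCases_castSucc, Fin.lastCases_last]
      simp_rw [hAp_cl, hAp_ll]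
      have e : ∀ k, (Sdel i' k + 1 / τ * ζ i' * ζ k) * u k =
          Sdel i' k * u k + 1 / τ * ζ i' * (ζ k * u k) := fun k => by ring
      rw [Finset.sum_congr rfl fun k _ => e k, Finset.sum_add_distrib, hζSdel,
        ← Finset.mul_sum, hζu, Matrix.one_apply_ne (Fin.castSucc_lt_last i').ne, hqρ]
      field_simp
      ring
    | cast j' =>
      rw [Fin.sum_univ_castSucc]
      simp only [Matrix.of_apply, Fin.lastCases_castSucc, Fin.lastCases_last]
      simp_rw [hAp_cc, hAp_lc]
      have e : ∀ k, (Sdel i' k + 1 / τ * ζ i' * ζ k) * Adel k j' =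
          Sdel i' k * Adel k j' + 1 / τ * ζ i' * (ζ k * Adel k j') := fun k => by ring
      rw [Finset.sum_congr rfl fun k _ => e k, Finset.sum_add_distrib, hSdelAdel',
        ← Finset.mul_sum, hζAdel, Matrix.one_apply,
        if_congr Fin.castSucc_inj rfl rfl]
      split_ifs <;> ring
end

section
/- Let q : ℝⁿ × ℝⁿ → ℝ be a symmetric kernel all of whose Gram matrices are positive semidefinite, let ρ > 0, and for a tuple X = (x₁,…,x_p) of points in ℝⁿ write P(X) for the p×p Gram matrix with entries P(X)_{ij} = q(x_i, x_j), Q(x,X) = (q(x,x₁),…,q(x,x_p))ᵀ ∈ ℝ^p, and Ω(X) = P(X) + ρ²I_p. Let X = (x₁,…,x_p), Y ∈ ℝ^{p×n}, l ∈ {1,…,p}, x ∈ ℝⁿ, and y ∈ ℝⁿ; let X̲ and Y̲ be X and Y with entry/row l deleted, and let X⁺ and Y⁺ be X̲ and Y̲ with x and yᵀ appended as the last entry/row. Set Σ = Ω(X)⁻¹, ϑ = Ω(X)⁻¹Y, Σ̲ = Σ_{¬l,¬l} − (1/Σ_{ll}) Σ_{¬l,l} Σ_{¬l,l}ᵀ,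 ζ = Σ̲ Q(x, X̲), τ = q(x,x) − Q(x,X̲)ᵀζ + ρ², ϑ̲ = ϑ_{¬l} − (1/Σ_{ll}) Σ_{¬l,l} ϑ_{[l]} (where ϑ_{[l]} is the l-th row of ϑ), and μ̲ = ϑ̲ᵀ Q(x, X̲) ∈ ℝⁿ. Then the p×n matrix whose first p−1 rows are ϑ̲ + (1/τ) ζ (μ̲ᵀ − yᵀ) and whose last row is (1/τ)(yᵀ − μ̲ᵀ) equals Ω(X⁺)⁻¹ Y⁺. -/
open Matrix

/-- Single-step correctness of the recursive update of the GP regression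
weights (the ϑ-part of Proposition 2): removing the data pair `l` and appending
the new pair `(x, y)`, the product `Ω(X⁺)⁻¹Y⁺` is obtained from `Σ = Ω(X)⁻¹`
and `ϑ = Ω(X)⁻¹Y` without matrix inversion. -/
theorem stmt_6 (n p : ℕ) (hp : 1 ≤ p)
    (q : (Fin n → ℝ) → (Fin n → ℝ) → ℝ)
    (hqsymm : ∀ u v, q u v = q v u)
    (hqpsd : ∀ (m : ℕ) (z : Fin m → (Fin n → ℝ)),
      (Matrix.of fun i j => q (z i) (z j)).PosSemidef)
    (ρ : ℝ) (hρ : 0 < ρ)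
    (X : Fin (p + 1) → (Fin n → ℝ)) (Y : Matrix (Fin (p + 1)) (Fin n) ℝ)
    (l : Fin (p + 1)) (x : Fin n → ℝ) (y : Fin n → ℝ)
    (Xdel : Fin p → (Fin n → ℝ)) (hXdel : Xdel = X ∘ l.succAbove)
    (Xplus : Fin (p + 1) → (Fin n → ℝ)) (hXplus : Xplus = Fin.snoc Xdel x)
    (Yplus : Matrix (Fin (p + 1)) (Fin n) ℝ)
    (hYplus : Yplus = Matrix.of fun i j =>
      Fin.lastCases (y j) (fun i' => Y (l.succAbove i') j) i)
    (S : Matrix (Fin (p + 1)) (Fin (p + 1)) ℝ)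
    (hS : S = ((Matrix.of fun i j => q (X i) (X j)) + ρ ^ 2 • 1)⁻¹)
    (ϑ : Matrix (Fin (p + 1)) (Fin n) ℝ)
    (hϑ : ϑ = ((Matrix.of fun i j => q (X i) (X j)) + ρ ^ 2 • 1)⁻¹ * Y)
    (Sdel : Matrix (Fin p) (Fin p) ℝ)
    (hSdel : Sdel = S.submatrix l.succAbove l.succAbove -
      (S l l)⁻¹ • vecMulVec (fun i => S (l.succAbove i) l)
        (fun j => S (l.succAbove j) l))
    (ζ : Fin p → ℝ) (hζ : ζ = Sdel.mulVec (fun i => q x (Xdel i)))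
    (τ : ℝ) (hτ : τ = q x x - (fun i => q x (Xdel i)) ⬝ᵥ ζ + ρ ^ 2)
    (ϑdel : Matrix (Fin p) (Fin n) ℝ)
    (hϑdel : ϑdel = Matrix.of fun i j =>
      ϑ (l.succAbove i) j - (S l l)⁻¹ * S (l.succAbove i) l * ϑ l j)
    (μdel : Fin n → ℝ)
    (hμdel : μdel = Matrix.vecMul (fun i => q x (Xdel i)) ϑdel) :
    (Matrix.of fun i j =>
      Fin.lastCases
        ((1 / τ) * (y j - μdel j))
        (fun i' => ϑdel i' j + (1 / τ) * ζ i' * (μdel j - y j)) i) =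
      ((Matrix.of fun i j => q (Xplus i) (Xplus j)) + ρ ^ 2 • 1)⁻¹ * Yplus := by
  classical
  -- All regularized Gram matrices are positive definite
  have hPD : ∀ (m : ℕ) (z : Fin m → (Fin n → ℝ)),
      ((Matrix.of fun i j => q (z i) (z j)) + ρ ^ 2 • 1).PosDef := by
    intro m z
    refine Matrix.PosDef.posSemidef_add (hqpsd m z) ?_
    rw [Matrix.smul_one_eq_diagonal]
    exact Matrix.PosDef.diagonal fun _ => by positivity
  set σ : Fin p → Fin (p + 1) := l.succAbove with hσ
  set Ω : Matrix (Fin (p+1)) (Fin (p+1)) ℝ :=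
    (Matrix.of fun i j => q (X i) (X j)) + ρ ^ 2 • 1 with hΩ
  set Ωd : Matrix (Fin p) (Fin p) ℝ :=
    (Matrix.of fun i j => q (Xdel i) (Xdel j)) + ρ ^ 2 • 1 with hΩd
  set A : Matrix (Fin (p+1)) (Fin (p+1)) ℝ :=
    (Matrix.of fun i j => q (Xplus i) (Xplus j)) + ρ ^ 2 • 1 with hA
  set b : Fin p → ℝ := fun i => q x (Xdel i) with hb
  have hΩpd : Ω.PosDef := hPD _ X
  have hΩdpd : Ωd.PosDef := hPD _ Xdel
  have hApd : A.PosDef := hPD _ Xplus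
  have hΩdet : IsUnit Ω.det := hΩpd.det_pos.ne'.isUnit
  have hAdet : IsUnit A.det := hApd.det_pos.ne'.isUnit
  -- entries
  have hσne : ∀ k : Fin p, σ k ≠ l := fun k => Fin.succAbove_ne l k
  have hΩd_entry : ∀ i j, Ωd i j = Ω (σ i) (σ j) := by
    intro i j
    simp [hΩd, hΩ, hXdel, hσ, Matrix.one_apply, Fin.succAbove_right_inj]
  have hA_cc : ∀ i j : Fin p, A (Fin.castSucc i) (Fin.castSucc j) = Ωd i j := by
    intro i j
    simp [hA, hΩd, hXplus, Matrix.one_apply, Fin.castSucc_inj]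
  have hA_cl : ∀ i : Fin p, A (Fin.castSucc i) (Fin.last p) = b i := by
    intro i
    have hne : Fin.castSucc i ≠ Fin.last p := Fin.ne_last_of_lt (Fin.castSucc_lt_last i)
    simp [hA, hXplus, Matrix.one_apply, hne, hqsymm x (Xdel i), hb]
  have hA_lc : ∀ j : Fin p, A (Fin.last p) (Fin.castSucc j) = b j := by
    intro j
    have hne : Fin.last p ≠ Fin.castSucc j := (Fin.ne_last_of_lt (Fin.castSucc_lt_last j)).symm
    simp [hA, hXplus, Matrix.one_apply, hne, hb]
  have hA_ll : A (Fin.last p) (Fin.last p) = q x x + ρ ^ 2 := by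
    simp [hA, hXplus, Matrix.one_apply]
  -- basic matrix equations
  have hSΩ : S * Ω = 1 := by rw [hS]; exact Matrix.nonsing_inv_mul _ hΩdet
  have hΩS : Ω * S = 1 := mul_eq_one_comm.mp hSΩ
  have hΩϑ : Ω * ϑ = Y := by
    rw [hϑ, ← Matrix.mul_assoc, Matrix.mul_nonsing_inv _ hΩdet, Matrix.one_mul]
  have hSpd : S.PosDef := by rw [hS]; exact hΩpd.inv
  have hSsym : ∀ i j, S i j = S j i := by
    intro i j
    have := hSpd.1.apply i j
    simpa using this.symm
  have hSll : 0 < S l l := by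
    have hne : (Pi.single l 1 : Fin (p+1) → ℝ) ≠ 0 := by
      intro h0
      have := congrFun h0 l
      simp at this
    have h := hSpd.dotProduct_mulVec_pos (x := Pi.single l 1) hne
    simpa [Matrix.mulVec_single, single_dotProduct] using h
  -- the deleted inverse
  have hSdelΩd : Sdel * Ωd = 1 := by
    ext i j
    have e1 := congrFun (congrFun hSΩ (σ i)) (σ j)
    have e2 := congrFun (congrFun hSΩ l) (σ j)
    rw [Matrix.mul_apply, Fin.sum_univ_succAbove _ l] at e1 e2
    have h1l : (1 : Matrix (Fin (p+1)) (Fin (p+1)) ℝ) l (σ j) = 0 := by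
      simp [Matrix.one_apply, (hσne j).symm, Ne.symm (hσne j)]
    have h1σ : (1 : Matrix (Fin (p+1)) (Fin (p+1)) ℝ) (σ i) (σ j)
        = (1 : Matrix (Fin p) (Fin p) ℝ) i j := by
      simp [Matrix.one_apply, hσ, Fin.succAbove_right_inj]
    rw [Matrix.mul_apply]
    have hsum : ∑ k, Sdel i k * Ωd k j
        = (∑ k, S (σ i) (σ k) * Ω (σ k) (σ j))
          - (S l l)⁻¹ * S (σ i) l * (∑ k, S l (σ k) * Ω (σ k) (σ j)) := by
      rw [Finset.mul_sum, ← Finset.sum_sub_distrib]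
      refine Finset.sum_congr rfl fun k _ => ?_
      rw [hSdel, hΩd_entry]
      simp only [Matrix.sub_apply, Matrix.submatrix_apply, Matrix.smul_apply,
        Matrix.vecMulVec_apply, smul_eq_mul]
      rw [hSsym (σ k) l]
      ring
    rw [hsum]
    have e1' : ∑ k, S (σ i) (σ k) * Ω (σ k) (σ j)
        = (1 : Matrix (Fin p) (Fin p) ℝ) i j - S (σ i) l * Ω l (σ j) := by
      rw [← h1σ, ← e1]; ring
    have e2' : ∑ k, S l (σ k) * Ω (σ k) (σ j) = - (S l l * Ω l (σ j)) := by
      have := e2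
      rw [h1l] at this
      linarith
    rw [e1', e2']
    field_simp
    ring
  have hΩdSdel : Ωd * Sdel = 1 := mul_eq_one_comm.mp hSdelΩd
  have hΩdζ : Ωd *ᵥ ζ = b := by
    rw [hζ, Matrix.mulVec_mulVec, hΩdSdel, Matrix.one_mulVec]
  -- Ωd * ϑdel = deleted Y
  have key2 : ∀ (i : Fin p) (j : Fin n), (∑ k, Ωd i k * ϑdel k j) = Y (σ i) j := by
    intro i j
    have e3 := congrFun (congrFun hΩϑ (σ i)) j
    have e5 := congrFun (congrFun hΩS (σ i)) l
    rw [Matrix.mul_apply, Fin.sum_univ_succAbove _ l] at e3 e5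
    have h1σl : (1 : Matrix (Fin (p+1)) (Fin (p+1)) ℝ) (σ i) l = 0 := by
      simp [Matrix.one_apply, hσne i]
    rw [h1σl] at e5
    have hsum : ∑ k, Ωd i k * ϑdel k j
        = (∑ k, Ω (σ i) (σ k) * ϑ (σ k) j)
          - (S l l)⁻¹ * ϑ l j * (∑ k, Ω (σ i) (σ k) * S (σ k) l) := by
      rw [Finset.mul_sum, ← Finset.sum_sub_distrib]
      refine Finset.sum_congr rfl fun k _ => ?_
      rw [hϑdel, hΩd_entry]
      simp only [Matrix.of_apply]
      ring
    have e5' : ∑ k, Ω (σ i) (σ k) * S (σ k) l = - (Ω (σ i) l * S l l) := by linarith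
    have e3' : ∑ k, Ω (σ i) (σ k) * ϑ (σ k) j = Y (σ i) j - Ω (σ i) l * ϑ l j := by
      linarith
    rw [hsum, e3', e5']
    field_simp
    ring
  -- positivity of τ
  set w : Fin (p + 1) → ℝ := Fin.snoc (fun i => -ζ i) 1 with hw
  have hAw : ∀ i : Fin (p + 1), (A *ᵥ w) i
      = Fin.lastCases τ (fun _ => (0:ℝ)) i := by
    intro i
    induction i using Fin.lastCases with
    | last =>
      have : (A *ᵥ w) (Fin.last p) = (∑ k, b k * (-ζ k)) + (q x x + ρ ^ 2) := by
        simp only [Matrix.mulVec, dotProduct]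
        rw [Fin.sum_univ_castSucc]
        simp [hw, Fin.snoc_castSucc, Fin.snoc_last, hA_lc, hA_ll]
      rw [this]
      simp only [Fin.lastCases_last]
      have hneg : ∑ k, b k * (-ζ k) = -(b ⬝ᵥ ζ) := by
        rw [dotProduct, ← Finset.sum_neg_distrib]
        exact Finset.sum_congr rfl fun k _ => by ring
      rw [hneg, hτ]
      ring
    | cast i =>
      have h1 : (A *ᵥ w) (Fin.castSucc i) = (∑ k, Ωd i k * (-ζ k)) + b i := by
        simp only [Matrix.mulVec, dotProduct]
        rw [Fin.sum_univ_castSucc]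
        simp [hw, Fin.snoc_castSucc, Fin.snoc_last, hA_cc, hA_cl]
      have h2 : ∑ k, Ωd i k * (-ζ k) = - (Ωd *ᵥ ζ) i := by
        rw [Matrix.mulVec, dotProduct, ← Finset.sum_neg_distrib]
        exact Finset.sum_congr rfl fun k _ => by ring
      rw [h1, h2, hΩdζ]
      simp
  have hτpos : 0 < τ := by
    have hwne : w ≠ 0 := by
      intro h0
      have := congrFun h0 (Fin.last p)
      simp [hw] at this
    have h := hApd.dotProduct_mulVec_pos (x := w) hwne
    have hsw : star w = w := by simp
    rw [hsw] at h
    have hdp : w ⬝ᵥ (A *ᵥ w) = τ := by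
      rw [dotProduct]
      rw [Fin.sum_univ_castSucc]
      simp only [hAw]
      simp [hw, Fin.snoc_last]
    rwa [hdp] at h
  have hτne : τ ≠ 0 := ne_of_gt hτpos
  -- main computation : A * M = Yplus
  set M : Matrix (Fin (p+1)) (Fin n) ℝ := (Matrix.of fun i j =>
      Fin.lastCases
        ((1 / τ) * (y j - μdel j))
        (fun i' => ϑdel i' j + (1 / τ) * ζ i' * (μdel j - y j)) i) with hM
  have hμ : ∀ j, μdel j = ∑ k, b k * ϑdel k j := by
    intro j
    rw [hμdel]
    simp [Matrix.vecMul, dotProduct, hb]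
  have hAM : A * M = Yplus := by
    ext i j
    induction i using Fin.lastCases with
    | last =>
      rw [Matrix.mul_apply, Fin.sum_univ_castSucc]
      simp only [hM, Matrix.of_apply, Fin.lastCases_last, Fin.lastCases_castSucc,
        hA_lc, hA_ll]
      have hsplit : ∑ k, b k * (ϑdel k j + 1 / τ * ζ k * (μdel j - y j))
          = (∑ k, b k * ϑdel k j) + (1 / τ) * (μdel j - y j) * (∑ k, b k * ζ k) := by
        rw [Finset.mul_sum, ← Finset.sum_add_distrib]
        exact Finset.sum_congr rfl fun k _ => by ring
      have hbz : ∑ k, b k * ζ k = b ⬝ᵥ ζ := rfl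
      rw [hsplit, hbz, ← hμ]
      have hbζτ : b ⬝ᵥ ζ = q x x + ρ ^ 2 - τ := by
        rw [hτ]; ring
      rw [hbζτ]
      have hYp : Yplus (Fin.last p) j = y j := by
        rw [hYplus]; simp
      rw [hYp]
      field_simp
      ring
    | cast i =>
      rw [Matrix.mul_apply, Fin.sum_univ_castSucc]
      simp only [hM, Matrix.of_apply, Fin.lastCases_last, Fin.lastCases_castSucc,
        hA_cc, hA_cl]
      have hsplit : ∑ k, Ωd i k * (ϑdel k j + 1 / τ * ζ k * (μdel j - y j))
          = (∑ k, Ωd i k * ϑdel k j) + (1 / τ) * (μdel j - y j) * (∑ k, Ωd i k * ζ k) := by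
        rw [Finset.mul_sum, ← Finset.sum_add_distrib]
        exact Finset.sum_congr rfl fun k _ => by ring
      have hz : ∑ k, Ωd i k * ζ k = b i := by
        have := congrFun hΩdζ i
        simpa [Matrix.mulVec, dotProduct] using this
      rw [hsplit, hz, key2]
      have hYp : Yplus (Fin.castSucc i) j = Y (σ i) j := by
        rw [hYplus]; simp [hσ]
      rw [hYp]
      field_simp
      ring
  calc M = A⁻¹ * (A * M) := by
        rw [← Matrix.mul_assoc, Matrix.nonsing_inv_mul _ hAdet, Matrix.one_mul]
    _ = A⁻¹ * Yplus := by rw [hAM]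
end

section
/- Let m ≥ 1, let H ∈ ℝ^{m×m} be symmetric positive definite, let β > 0, u_d ∈ ℝᵐ, a ∈ ℝᵐ, and s, c₀ ∈ ℝ, and assume (a, s) ≠ (0, 0). Define ε = aᵀH⁻¹a + s²/β (which is positive), ω = c₀ + aᵀu_d, λ_* = −ω/ε if ω < 0 and λ_* = 0 if ω ≥ 0, u_* = u_d + λ_* H⁻¹a, and δ_* = λ_* s / β. Then c₀ + aᵀu_* + s δ_* ≥ 0, and for every (û, δ̂) ∈ ℝᵐ × ℝ with (û, δ̂) ≠ (u_*, δ_*) and c₀ + aᵀû + s δ̂ ≥ 0, one has (1/2)(û − u_d)ᵀH(û − u_d) + (β/2) δ̂² > (1/2)(u_* − u_d)ᵀH(u_* − u_d) + (β/2) δ_*². -/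
open Matrix

private lemma symm_dot {m : ℕ} (H : Matrix (Fin m) (Fin m) ℝ) (hH : Hᴴ = H)
    (x y : Fin m → ℝ) : x ⬝ᵥ H.mulVec y = y ⬝ᵥ H.mulVec x := by
  rw [Matrix.dotProduct_mulVec, ← Matrix.mulVec_transpose]
  have : Hᵀ = H := hH
  rw [this, dotProduct_comm]

set_option maxHeartbeats 1000000 in
/-- Theorem 1 at a fixed state: the closed-form safety-filter pair
`(u⋆, δ⋆)` is feasible and is the unique global minimizer of the quadratic
cost subject to the affine CBF constraint. -/
theorem stmt_10 (m : ℕ) (hm : 1 ≤ m)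
    (H : Matrix (Fin m) (Fin m) ℝ) (hH : H.PosDef)
    (β : ℝ) (hβ : 0 < β)
    (ud a : Fin m → ℝ) (s c₀ : ℝ)
    (hns : ¬(a = 0 ∧ s = 0))
    (ε ω lam : ℝ) (ustar : Fin m → ℝ) (δstar : ℝ)
    (hε : ε = a ⬝ᵥ H⁻¹.mulVec a + s ^ 2 / β)
    (hω : ω = c₀ + a ⬝ᵥ ud)
    (hlam : lam = if ω < 0 then -ω / ε else 0)
    (hust : ustar = ud + lam • H⁻¹.mulVec a)
    (hδst : δstar = lam * s / β) :
    0 < ε ∧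
    0 ≤ c₀ + a ⬝ᵥ ustar + s * δstar ∧
    ∀ (uhat : Fin m → ℝ) (δhat : ℝ), (uhat, δhat) ≠ (ustar, δstar) →
      0 ≤ c₀ + a ⬝ᵥ uhat + s * δhat →
      (1 / 2) * ((ustar - ud) ⬝ᵥ H.mulVec (ustar - ud)) + (β / 2) * δstar ^ 2 <
        (1 / 2) * ((uhat - ud) ⬝ᵥ H.mulVec (uhat - ud)) + (β / 2) * δhat ^ 2 := by
  have hHinv : (H⁻¹).PosDef := hH.inv
  obtain ⟨q, hq⟩ : ∃ q : ℝ, q = a ⬝ᵥ H⁻¹.mulVec a := ⟨_, rfl⟩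
  rw [← hq] at hε
  have hq0 : 0 ≤ q := by
    rw [hq]; simpa using hHinv.posSemidef.dotProduct_mulVec_nonneg a
  -- ε > 0
  have hεpos : 0 < ε := by
    rcases not_and_or.mp hns with ha | hs
    · have h1 : 0 < q := by rw [hq]; simpa using hHinv.dotProduct_mulVec_pos ha
      have h2 : 0 ≤ s ^ 2 / β := by positivity
      rw [hε]; linarith
    · have h2 : 0 < s ^ 2 / β := by positivity
      rw [hε]; linarith
  -- lam ≥ 0
  have hlam0 : 0 ≤ lam := by
    rw [hlam]; split_ifs with h
    · have : 0 < -ω := by linarith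
      positivity
    · exact le_refl 0
  -- H.mulVec (H⁻¹.mulVec a) = a
  have hHa : H.mulVec (H⁻¹.mulVec a) = a := by
    rw [Matrix.mulVec_mulVec, Matrix.mul_nonsing_inv _ (isUnit_iff_isUnit_det _ |>.mp hH.isUnit),
      Matrix.one_mulVec]
  have hHx : H.mulVec (ustar - ud) = lam • a := by
    rw [hust]; simp [Matrix.mulVec_smul, hHa]
  -- a ⬝ᵥ ustar
  have hadot : a ⬝ᵥ ustar = a ⬝ᵥ ud + lam * q := by
    rw [hust, dotProduct_add, dotProduct_smul, smul_eq_mul, hq]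
  -- feasibility value
  have hval : c₀ + a ⬝ᵥ ustar + s * δstar = ω + lam * ε := by
    rw [hadot, hδst, hω, hε]; field_simp; ring
  have hfeas : 0 ≤ c₀ + a ⬝ᵥ ustar + s * δstar := by
    rw [hval, hlam]
    split_ifs with h
    · have : -ω / ε * ε = -ω := by field_simp
      rw [this]; linarith
    · simp; linarith [not_lt.mp h]
  refine ⟨hεpos, hfeas, ?_⟩
  intro uhat δhat hne hcon
  obtain ⟨v, hv⟩ : ∃ v : Fin m → ℝ, v = uhat - ustar := ⟨_, rfl⟩
  obtain ⟨e, he⟩ : ∃ e : ℝ, e = δhat - δstar := ⟨_, rfl⟩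
  -- quadratic form value at ustar
  have hxqx : (ustar - ud) ⬝ᵥ H.mulVec (ustar - ud) = lam ^ 2 * q := by
    rw [hHx, hust]
    simp [dotProduct_smul, smul_dotProduct, dotProduct_comm (H⁻¹.mulVec a) a, ← hq]
    ring
  -- cross terms
  have hsym := symm_dot H hH.isHermitian
  have hcross : (ustar - ud) ⬝ᵥ H.mulVec v = lam * (a ⬝ᵥ v) := by
    rw [hsym, hHx, dotProduct_smul, smul_eq_mul, dotProduct_comm]
  have hexp : (uhat - ud) ⬝ᵥ H.mulVec (uhat - ud)
      = v ⬝ᵥ H.mulVec v + 2 * (lam * (a ⬝ᵥ v)) + lam ^ 2 * q := by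
    have huhat : uhat - ud = v + (ustar - ud) := by rw [hv]; abel
    rw [huhat, Matrix.mulVec_add, dotProduct_add, add_dotProduct, add_dotProduct]
    rw [hsym v (ustar - ud), hcross, hxqx]
    ring
  -- constraint implies lam * (a ⬝ᵥ v + s * e) ≥ 0
  have hcdiff : c₀ + a ⬝ᵥ uhat + s * δhat
      = (c₀ + a ⬝ᵥ ustar + s * δstar) + (a ⬝ᵥ v + s * e) := by
    have : a ⬝ᵥ uhat = a ⬝ᵥ ustar + a ⬝ᵥ v := by
      rw [hv, dotProduct_sub]; ring
    rw [this, he]; ring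
  have hprod : 0 ≤ lam * (a ⬝ᵥ v + s * e) := by
    rcases lt_or_ge ω 0 with h | h
    · have hlampos : 0 < lam := by
        rw [hlam, if_pos h]
        have hω' : 0 < -ω := by linarith
        exact div_pos hω' hεpos
      have hzero : c₀ + a ⬝ᵥ ustar + s * δstar = 0 := by
        rw [hval, hlam, if_pos h]
        field_simp; ring
      have : 0 ≤ a ⬝ᵥ v + s * e := by
        rw [hcdiff, hzero] at hcon; linarith
      exact mul_nonneg hlampos.le this
    · have : lam = 0 := by rw [hlam, if_neg (not_lt.mpr h)]
      simp [this]
  -- positivity of the strict part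
  have hstrict : 0 < (1/2) * (v ⬝ᵥ H.mulVec v) + (β/2) * e ^ 2 := by
    have hv0 : 0 ≤ v ⬝ᵥ H.mulVec v := by simpa using hH.posSemidef.dotProduct_mulVec_nonneg v
    rcases eq_or_ne v 0 with hveq | hvne
    · have he0 : e ≠ 0 := by
        intro heq
        apply hne
        have h1 : uhat = ustar := by
          have := sub_eq_zero.mp (hv ▸ hveq)
          exact this
        have h2 : δhat = δstar := by
          have := sub_eq_zero.mp (he ▸ heq)
          exact this
        rw [h1, h2]
      have h2 : 0 < e ^ 2 := by positivity
      have h3 : v ⬝ᵥ H.mulVec v = 0 := by rw [hveq]; simp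
      have h4 : 0 < β * e ^ 2 := mul_pos hβ h2
      rw [h3]; linarith
    · have hpos : 0 < v ⬝ᵥ H.mulVec v := by simpa using hH.dotProduct_mulVec_pos hvne
      have h4 : 0 ≤ β * e ^ 2 := mul_nonneg hβ.le (sq_nonneg e)
      linarith
  -- put it together
  have hδexp : δhat ^ 2 = δstar ^ 2 + 2 * δstar * e + e ^ 2 := by
    have : δhat = δstar + e := by rw [he]; ring
    rw [this]; ring
  have hβδ : β * δstar = lam * s := by rw [hδst]; field_simp
  have hkey : β * (δstar * e) = lam * (s * e) := by
    rw [← mul_assoc, hβδ]; ring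
  have hprod' : 0 ≤ lam * (a ⬝ᵥ v) + lam * (s * e) := by
    rw [← mul_add]; exact hprod
  rw [hexp, hxqx, hδexp]
  nlinarith [hprod', hstrict, hkey]
end

section
/- Let m ≥ 1, let H ∈ ℝ^{m×m} be symmetric positive definite, let β > 0, u_d ∈ ℝᵐ, a ∈ ℝᵐ, and s, c₀ ∈ ℝ with (a, s) ≠ (0, 0). Define ε = aᵀH⁻¹a + s²/β, ω = c₀ + aᵀu_d, λ_* = −ω/ε if ω < 0 and λ_* = 0 if ω ≥ 0, u_* = u_d + λ_* H⁻¹a, and δ_* = λ_* s/β. Then the constraint value at the optimum satisfies c₀ + aᵀu_* + s δ_* = max(ω, 0) ≥ 0, and complementary slackness holds: λ_* · (c₀ + aᵀu_* + s δ_*) = 0. -/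
open Matrix

/-- Feasibility and complementary slackness of the closed-form safety filter:
the constraint value at `(u⋆, δ⋆)` equals `max(ω, 0) ≥ 0`, and
`λ⋆ · (constraint value) = 0`. -/
theorem stmt_11 (m : ℕ) (hm : 1 ≤ m)
    (H : Matrix (Fin m) (Fin m) ℝ) (hH : H.PosDef)
    (β : ℝ) (hβ : 0 < β)
    (ud a : Fin m → ℝ) (s c₀ : ℝ)
    (hns : ¬(a = 0 ∧ s = 0))
    (ε ω lam : ℝ) (ustar : Fin m → ℝ) (δstar : ℝ)
    (hε : ε = a ⬝ᵥ H⁻¹.mulVec a + s ^ 2 / β)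
    (hω : ω = c₀ + a ⬝ᵥ ud)
    (hlam : lam = if ω < 0 then -ω / ε else 0)
    (hust : ustar = ud + lam • H⁻¹.mulVec a)
    (hδst : δstar = lam * s / β) :
    c₀ + a ⬝ᵥ ustar + s * δstar = max ω 0 ∧
    0 ≤ c₀ + a ⬝ᵥ ustar + s * δstar ∧
    lam * (c₀ + a ⬝ᵥ ustar + s * δstar) = 0 := by
  have hinv : (H⁻¹).PosDef := hH.inv
  have hq : ∀ v : Fin m → ℝ, v ≠ 0 → 0 < v ⬝ᵥ H⁻¹.mulVec v := fun v hv => by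
    simpa [dotProduct_comm] using hinv.dotProduct_mulVec_pos hv
  have hq0 : 0 ≤ a ⬝ᵥ H⁻¹.mulVec a := by
    by_cases ha : a = 0
    · simp [ha]
    · exact (hq a ha).le
  have hε0 : 0 < ε := by
    rw [hε]
    rcases not_and_or.mp hns with ha | hs
    · have := hq a ha
      have : 0 ≤ s ^ 2 / β := div_nonneg (sq_nonneg s) hβ.le
      have := hq a ha
      linarith
    · have : 0 < s ^ 2 / β := by positivity
      linarith
  -- constraint value = ω + lam * ε
  have key : c₀ + a ⬝ᵥ ustar + s * δstar = ω + lam * ε := by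
    rw [hust, hδst, hω, hε]
    rw [dotProduct_add, dotProduct_smul]
    ring_nf
  by_cases hcase : ω < 0
  · have hlam' : lam = -ω / ε := by rw [hlam, if_pos hcase]
    have hval : c₀ + a ⬝ᵥ ustar + s * δstar = 0 := by
      rw [key, hlam', div_mul_cancel₀ _ hε0.ne']
      ring
    refine ⟨?_, by rw [hval], by rw [hval, mul_zero]⟩
    rw [hval, max_eq_right hcase.le]
  · have hlam' : lam = 0 := by rw [hlam, if_neg hcase]
    have hval : c₀ + a ⬝ᵥ ustar + s * δstar = ω := by
      rw [key, hlam']; ring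
    push_neg at hcase
    refine ⟨?_, by rw [hval]; exact hcase, by rw [hlam', zero_mul]⟩
    rw [hval, max_eq_left hcase]
end

section
/- Let α : ℝ → ℝ be locally Lipschitz, nondecreasing, and satisfy α(0) = 0. Let T ∈ (0, ∞], let h : [0, T) → ℝ be differentiable with h(0) ≥ 0, and suppose that for all t ∈ [0, T), h′(t) ≥ −α(h(t)). Then h(t) ≥ 0 for all t ∈ [0, T). -/
/-- Comparison-lemma core of Theorem 2 (CBF forward invariance): if
`h(0) ≥ 0` and `h'(t) ≥ -α(h(t))` on `[0, T)` for a locally Lipschitz,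
nondecreasing `α` with `α(0) = 0`, then `h(t) ≥ 0` on `[0, T)`. -/
theorem stmt_12 (α : ℝ → ℝ) (hlip : LocallyLipschitz α) (hmono : Monotone α)
    (hα0 : α 0 = 0) (T : EReal) (hT : 0 < T)
    (h h' : ℝ → ℝ) (hh0 : 0 ≤ h 0)
    (hderiv : ∀ t ∈ {t : ℝ | 0 ≤ t ∧ (t : EReal) < T},
      HasDerivWithinAt h (h' t) {t : ℝ | 0 ≤ t ∧ (t : EReal) < T} t)
    (hineq : ∀ t ∈ {t : ℝ | 0 ≤ t ∧ (t : EReal) < T}, -α (h t) ≤ h' t) :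
    ∀ t ∈ {t : ℝ | 0 ≤ t ∧ (t : EReal) < T}, 0 ≤ h t := by
  set S : Set ℝ := {t : ℝ | 0 ≤ t ∧ (t : EReal) < T} with hS
  by_contra hcon
  push_neg at hcon
  obtain ⟨t0, ht0S, ht0⟩ := hcon
  obtain ⟨ht00, ht0T⟩ := ht0S
  -- continuity of h on S
  have hcont : ContinuousOn h S := fun t ht => (hderiv t ht).continuousWithinAt
  -- Icc 0 t0 ⊆ S
  have hIccS : Set.Icc 0 t0 ⊆ S := by
    intro t ht
    exact ⟨ht.1, lt_of_le_of_lt (EReal.coe_le_coe_iff.2 ht.2) ht0T⟩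
  -- the set K
  set K : Set ℝ := Set.Icc 0 t0 ∩ h ⁻¹' Set.Ici 0 with hK
  have hKclosed : IsClosed K :=
    ContinuousOn.preimage_isClosed_of_isClosed (hcont.mono hIccS) isClosed_Icc isClosed_Ici
  have h0K : (0 : ℝ) ∈ K := ⟨⟨le_refl 0, ht00⟩, hh0⟩
  have hKne : K.Nonempty := ⟨0, h0K⟩
  have hKbdd : BddAbove K := ⟨t0, fun x hx => hx.1.2⟩
  set s := sSup K with hs
  have hsK : s ∈ K := hKclosed.csSup_mem hKne hKbdd
  have hs0 : 0 ≤ s := hsK.1.1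
  have hst0 : s ≤ t0 := hsK.1.2
  have hhs : 0 ≤ h s := hsK.2
  have hsne : s ≠ t0 := by
    intro he; rw [he] at hhs; exact absurd hhs (not_le.2 ht0)
  have hslt : s < t0 := lt_of_le_of_ne hst0 hsne
  -- h < 0 on (s, t0]
  have hneg : ∀ t ∈ Set.Ioc s t0, h t < 0 := by
    intro t ht
    by_contra hge
    push_neg at hge
    have : t ∈ K := ⟨⟨le_trans hs0 ht.1.le, ht.2⟩, hge⟩
    exact absurd (le_csSup hKbdd this) (not_le.2 ht.1)
  -- interior of Icc s t0 is Ioo s t0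
  have hint : interior (Set.Icc s t0) = Set.Ioo s t0 := interior_Icc
  have hIooS : Set.Ioo s t0 ⊆ S := fun t ht => hIccS ⟨le_trans hs0 ht.1.le, ht.2.le⟩
  have hmonoOn : MonotoneOn h (Set.Icc s t0) := by
    apply monotoneOn_of_hasDerivWithinAt_nonneg (f' := h') (convex_Icc s t0)
      (hcont.mono (fun t ht => hIccS ⟨le_trans hs0 ht.1, ht.2⟩))
    · intro t ht
      rw [hint] at ht ⊢
      exact ((hderiv t (hIooS ht)).mono hIooS).mono Set.Subset.rfl
    · intro t ht
      rw [hint] at ht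
      have htS : t ∈ S := hIooS ht
      have h1 : α (h t) ≤ 0 := by
        rw [← hα0]; exact hmono (hneg t ⟨ht.1, ht.2.le⟩).le
      have := hineq t htS
      linarith
  have := hmonoOn ⟨le_refl s, hst0⟩ ⟨hst0, le_refl t0⟩ hst0
  linarith
end

section
/- Let ξ : ℝ → ℝ be continuously differentiable with ξ(t) = 0 for all t ≤ 0 and ξ(t) = 1 for all t ≥ 1. Let T > 0 and let (a_k)_{k ≥ −1} be a sequence of real numbers. Define F : [0, ∞) → ℝ by F(t) = ξ((t − kT)/T)·a_k + (1 − ξ((t − kT)/T))·a_{k−1} for t ∈ [kT, (k+1)T), k ∈ ℕ. Then F is continuously differentiable on [0, ∞). -/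
/-- The blended time-varying model (equations (24)–(25)): gluing consecutive
values `a_{k-1}, a_k` with a `C¹` transition function `ξ` that is `0` on
`(-∞,0]` and `1` on `[1,∞)` over each sampling interval `[kT, (k+1)T)` yields
a continuously differentiable function on `[0, ∞)`. -/
theorem stmt_14 (ξ : ℝ → ℝ) (hξC1 : ContDiff ℝ 1 ξ)
    (hξ0 : ∀ t ≤ (0 : ℝ), ξ t = 0) (hξ1 : ∀ t, (1 : ℝ) ≤ t → ξ t = 1)
    (T : ℝ) (hT : 0 < T) (a : ℤ → ℝ) (F : ℝ → ℝ)
    (hF : ∀ k : ℕ, ∀ t ∈ Set.Ico ((k : ℝ) * T) (((k : ℝ) + 1) * T),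
      F t = ξ ((t - k * T) / T) * a k + (1 - ξ ((t - k * T) / T)) * a (k - 1)) :
    ContDiffOn ℝ 1 F (Set.Ici 0) := by
  set blend : ℤ → ℝ → ℝ :=
    fun k t => ξ ((t - (k : ℝ) * T) / T) * a k + (1 - ξ ((t - (k : ℝ) * T) / T)) * a (k - 1)
    with hblend
  have hC1 : ∀ k : ℤ, ContDiff ℝ 1 (blend k) := by
    intro k
    have h1 : ContDiff ℝ 1 (fun t : ℝ => ξ ((t - (k : ℝ) * T) / T)) := by
      apply hξC1.comp
      exact (contDiff_id.sub contDiff_const).div_const _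
    exact (h1.mul contDiff_const).add ((contDiff_const.sub h1).mul contDiff_const)
  have hlo : ∀ (k : ℤ) (s : ℝ), s ≤ (k : ℝ) * T → blend k s = a (k - 1) := by
    intro k s hs
    have h0 : (s - (k : ℝ) * T) / T ≤ 0 :=
      div_nonpos_of_nonpos_of_nonneg (by linarith) hT.le
    simp [hblend, hξ0 _ h0]
  have hhi : ∀ (k : ℤ) (s : ℝ), ((k : ℝ) + 1) * T ≤ s → blend k s = a k := by
    intro k s hs
    have h1 : (1 : ℝ) ≤ (s - (k : ℝ) * T) / T := by
      rw [le_div_iff₀ hT]; nlinarith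
    simp [hblend, hξ1 _ h1]
  have hF' : ∀ k : ℕ, ∀ t ∈ Set.Ico ((k : ℝ) * T) (((k : ℝ) + 1) * T),
      F t = blend (k : ℤ) t := by
    intro k t htk
    have := hF k t htk
    simpa [hblend] using this
  intro t ht
  obtain ⟨k, hk1, hk2⟩ : ∃ k : ℕ, (k : ℝ) * T ≤ t ∧ t < ((k : ℝ) + 1) * T := by
    have h0 : (0 : ℤ) ≤ ⌊t / T⌋ := Int.floor_nonneg.mpr (div_nonneg ht hT.le)
    refine ⟨⌊t / T⌋.toNat, ?_, ?_⟩
    · have h1 : ((⌊t / T⌋.toNat : ℝ)) ≤ t / T := by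
        rw [show ((⌊t / T⌋.toNat : ℝ)) = ((⌊t / T⌋ : ℤ) : ℝ) by
          exact_mod_cast Int.toNat_of_nonneg h0]
        exact Int.floor_le _
      calc ((⌊t / T⌋.toNat : ℝ)) * T ≤ (t / T) * T := by nlinarith
        _ = t := by field_simp
    · have h1 : t / T < ((⌊t / T⌋.toNat : ℝ)) + 1 := by
        rw [show ((⌊t / T⌋.toNat : ℝ)) = ((⌊t / T⌋ : ℤ) : ℝ) by
          exact_mod_cast Int.toNat_of_nonneg h0]
        exact Int.lt_floor_add_one _
      calc t = (t / T) * T := by field_simp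
        _ < (((⌊t / T⌋.toNat : ℝ)) + 1) * T := by nlinarith
  rcases eq_or_lt_of_le hk1 with heq | hlt
  · -- t = k*T : boundary point
    rcases Nat.eq_zero_or_eq_succ_pred k with hk0 | hksucc
    · -- k = 0, t = 0 : only need C¹ within Ici 0
      subst hk0
      have ht0 : t = 0 := by simpa using heq.symm
      subst ht0
      refine ((hC1 0).contDiffAt.contDiffWithinAt).congr_of_eventuallyEq ?_ ?_
      · have hmem : Set.Ico (0 : ℝ) T ∈ nhdsWithin (0 : ℝ) (Set.Ici 0) := by
          rw [show Set.Ico (0 : ℝ) T = Set.Ici 0 ∩ Set.Iio T by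
            ext x; simp [Set.mem_Ico, Set.mem_Ici, Set.mem_Iio, and_comm]]
          exact Filter.inter_mem self_mem_nhdsWithin
            (nhdsWithin_le_nhds (Iio_mem_nhds hT))
        filter_upwards [hmem] with s hs
        have := hF' 0 s (by simpa using hs)
        simpa using this
      · have := hF' 0 0 (by constructor <;> simp [hT])
        simpa using this
    · -- k = m + 1
      set m := k - 1 with hm
      have hk : k = m + 1 := hksucc
      have hcast : ((k : ℝ)) = (m : ℝ) + 1 := by rw [hk]; push_cast; ring
      set H : ℝ → ℝ := fun s => blend (m : ℤ) s + blend (k : ℤ) s - a (m : ℤ) with hH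
      have hHC1 : ContDiff ℝ 1 H :=
        ((hC1 m).add (hC1 k)).sub contDiff_const
      have hopen : t ∈ Set.Ioo ((m : ℝ) * T) (((k : ℝ) + 1) * T) := by
        constructor
        · rw [← heq, hcast]; nlinarith
        · exact hk2
      have hEq : ∀ s ∈ Set.Ioo ((m : ℝ) * T) (((k : ℝ) + 1) * T), F s = H s := by
        intro s hs
        rcases lt_or_ge s ((k : ℝ) * T) with hsl | hsr
        · -- s in [mT, kT)
          have hFs : F s = blend (m : ℤ) s := by
            apply hF' m s
            constructor
            · exact hs.1.le
            · rw [← hcast]; exact hsl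
          have hbk : blend (k : ℤ) s = a ((k : ℤ) - 1) := hlo _ _ hsl.le
          have hidx : ((k : ℤ)) - 1 = (m : ℤ) := by rw [hk]; push_cast; ring
          rw [hH]; simp only []
          rw [hFs, hbk, hidx]; ring
        · -- s in [kT, (k+1)T)
          have hFs : F s = blend (k : ℤ) s := hF' k s ⟨hsr, hs.2⟩
          have hbm : blend (m : ℤ) s = a (m : ℤ) := by
            apply hhi
            push_cast
            rw [← hcast]
            exact hsr
          rw [hH]; simp only []
          rw [hFs, hbm]; ring
      have hev : F =ᶠ[nhds t] H :=
        Filter.eventuallyEq_of_mem (Ioo_mem_nhds hopen.1 hopen.2) hEq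
      exact (hHC1.contDiffAt.congr_of_eventuallyEq hev).contDiffWithinAt
  · -- interior point of [kT, (k+1)T)
    have hEq : ∀ s ∈ Set.Ioo ((k : ℝ) * T) (((k : ℝ) + 1) * T), F s = blend (k : ℤ) s :=
      fun s hs => hF' k s ⟨hs.1.le, hs.2⟩
    have hev : F =ᶠ[nhds t] blend (k : ℤ) :=
      Filter.eventuallyEq_of_mem (Ioo_mem_nhds hlt hk2) hEq
    exact ((hC1 k).contDiffAt.congr_of_eventuallyEq hev).contDiffWithinAt
end
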